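/- arXiv:1109.2848 — 6 statements merged into one kernel-verified Lean document; each statement's English description precedes it below -/
import Mathlib

section
/- Let N : ℕ and let ρ : Fin N → ℂ with ρ ≠ 0. The following are equivalent: (i) ξ(ρ) = 1; (ii) ρ_I = ζ(ρ)·conj(ρ_I) for every I; (iii) ρ is a complex multiple of a real vector, i.e. there exist c ∈ ℂ and x : Fin N → ℝ with ρ_I = c·x_I for all I. (Toy-model form of Proposition 1, item (xoneifreal), including the observation that 'real' vectors saturate ξ = 1.) -/
noncomputable section

open scoped BigOperators

namespace PureSpinorToy

variable {N : ℕ}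

/-- Complex bilinear pairing `B(ρ,σ) = ∑ I, ρ_I σ_I`. -/
def B (ρ σ : Fin N → ℂ) : ℂ := ∑ I, ρ I * σ I

/-- Hermitian inner product `⟪ρ,σ⟫ = ∑ I, conj(ρ_I) σ_I`. -/
def hInner (ρ σ : Fin N → ℂ) : ℂ := ∑ I, (starRingEnd ℂ) (ρ I) * σ I

/-- Norm square `‖ρ‖² = ⟪ρ,ρ⟫` (a nonnegative real). -/
def nsq (ρ : Fin N → ℂ) : ℝ := (hInner ρ ρ).re

/-- Componentwise complex conjugation `ρ̄`. -/
def conjFun (ρ : Fin N → ℂ) : Fin N → ℂ := fun I => (starRingEnd ℂ) (ρ I)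

/-- `ζ(ρ) = B(ρ,ρ)/‖ρ‖²`. -/
def zeta (ρ : Fin N → ℂ) : ℂ := B ρ ρ / (nsq ρ : ℂ)

/-- `ξ(ρ) = |ζ(ρ)|²`. -/
def xi (ρ : Fin N → ℂ) : ℝ := Complex.normSq (zeta ρ)

/-- The family of projection maps
`P_f(ρ) = f(ξ(ρ)) • (ρ − (ζ(ρ)/(1+√(1−ξ(ρ)))) • ρ̄)`. -/
def P (f : ℝ → ℂ) (ρ : Fin N → ℂ) : Fin N → ℂ :=
  f (xi ρ) • (ρ - (zeta ρ / (1 + (Real.sqrt (1 - xi ρ) : ℂ))) • conjFun ρ)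

/-- The special function `h(t) = (1+√(1−t))/(2√(1−t))`. -/
def h (t : ℝ) : ℂ := (((1 + Real.sqrt (1 - t)) / (2 * Real.sqrt (1 - t)) : ℝ) : ℂ)

/-- The potential `Φ(ρ) = (‖ρ‖²/2)(1+√(1−ξ(ρ)))`. -/
def Phi (ρ : Fin N → ℂ) : ℝ := (nsq ρ / 2) * (1 + Real.sqrt (1 - xi ρ))

lemma nsq_eq (ρ : Fin N → ℂ) : nsq ρ = ∑ I, Complex.normSq (ρ I) := by
  simp [nsq, hInner, ← Complex.normSq_eq_conj_mul_self, Complex.re_sum]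

lemma hInner_self (ρ : Fin N → ℂ) :
    (∑ I, (starRingEnd ℂ) (ρ I) * ρ I) = ((nsq ρ : ℝ) : ℂ) := by
  rw [nsq_eq]
  push_cast
  simp [← Complex.normSq_eq_conj_mul_self]

lemma nsq_pos (ρ : Fin N → ℂ) (hρ : ρ ≠ 0) : 0 < nsq ρ := by
  rw [nsq_eq]
  have : ∃ I, ρ I ≠ 0 := by
    by_contra h
    push_neg at h
    exact hρ (funext h)
  obtain ⟨I, hI⟩ := this
  exact Finset.sum_pos' (fun i _ => Complex.normSq_nonneg _)
    ⟨I, Finset.mem_univ I, Complex.normSq_pos.mpr hI⟩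

lemma keyC (ρ : Fin N → ℂ) (hρ : ρ ≠ 0) :
    (∑ I, (starRingEnd ℂ) (ρ I - zeta ρ * (starRingEnd ℂ) (ρ I)) *
      (ρ I - zeta ρ * (starRingEnd ℂ) (ρ I)))
    = (nsq ρ : ℂ) * (1 - (xi ρ : ℂ)) := by
  have hs : (nsq ρ : ℂ) ≠ 0 := by
    exact_mod_cast (nsq_pos ρ hρ).ne'
  have hconjB : (∑ I, (starRingEnd ℂ) (ρ I) * (starRingEnd ℂ) (ρ I)) = (starRingEnd ℂ) (B ρ ρ) := by
    simp [B, map_sum, map_mul]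
  have hB : (∑ I, ρ I * ρ I) = B ρ ρ := rfl
  have hH : (∑ I, (starRingEnd ℂ) (ρ I) * ρ I) = ((nsq ρ : ℝ) : ℂ) := hInner_self ρ
  have hH' : (∑ I, ρ I * (starRingEnd ℂ) (ρ I)) = ((nsq ρ : ℝ) : ℂ) := by
    rw [← hH]; exact Finset.sum_congr rfl fun I _ => mul_comm _ _
  have expand : ∀ I, (starRingEnd ℂ) (ρ I - zeta ρ * (starRingEnd ℂ) (ρ I)) *
      (ρ I - zeta ρ * (starRingEnd ℂ) (ρ I))
      = ((starRingEnd ℂ) (ρ I) * ρ I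
        - zeta ρ * ((starRingEnd ℂ) (ρ I) * (starRingEnd ℂ) (ρ I)))
        - ((starRingEnd ℂ) (zeta ρ) * (ρ I * ρ I)
        - ((starRingEnd ℂ) (zeta ρ) * zeta ρ) * (ρ I * (starRingEnd ℂ) (ρ I))) := by
    intro I
    simp only [map_sub, map_mul, Complex.conj_conj]
    ring
  rw [Finset.sum_congr rfl fun I _ => expand I]
  rw [Finset.sum_sub_distrib, Finset.sum_sub_distrib, Finset.sum_sub_distrib,
    ← Finset.mul_sum, ← Finset.mul_sum, ← Finset.mul_sum, hconjB, hB, hH, hH']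
  have hxc : ((xi ρ : ℝ) : ℂ) = (starRingEnd ℂ) (zeta ρ) * zeta ρ := by
    rw [xi, Complex.normSq_eq_conj_mul_self]
  rw [hxc]
  have hzc : (starRingEnd ℂ) (zeta ρ) = (starRingEnd ℂ) (B ρ ρ) / (nsq ρ : ℂ) := by
    simp [zeta, map_div₀, Complex.conj_ofReal]
  rw [hzc, zeta]
  field_simp
  ring

lemma keyR (ρ : Fin N → ℂ) (hρ : ρ ≠ 0) :
    (∑ I, Complex.normSq (ρ I - zeta ρ * (starRingEnd ℂ) (ρ I))) = nsq ρ * (1 - xi ρ) := by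
  have h1 := keyC ρ hρ
  have h2 : ((∑ I, Complex.normSq (ρ I - zeta ρ * (starRingEnd ℂ) (ρ I)) : ℝ) : ℂ)
      = ((nsq ρ * (1 - xi ρ) : ℝ) : ℂ) := by
    push_cast
    rw [← h1]
    exact Finset.sum_congr rfl fun I _ => by
      rw [Complex.normSq_eq_conj_mul_self]
  exact_mod_cast h2

/-- `ξ(ρ)=1` iff `ρ = ζ(ρ)·ρ̄` componentwise. -/
lemma xi_one_iff (ρ : Fin N → ℂ) (hρ : ρ ≠ 0) :
    xi ρ = 1 ↔ ∀ I, ρ I = zeta ρ * (starRingEnd ℂ) (ρ I) := by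
  have hs := nsq_pos ρ hρ
  constructor
  · intro hx I
    have h0 : (∑ J, Complex.normSq (ρ J - zeta ρ * (starRingEnd ℂ) (ρ J))) = 0 := by
      rw [keyR ρ hρ, hx]; ring
    have hI : Complex.normSq (ρ I - zeta ρ * (starRingEnd ℂ) (ρ I)) = 0 := by
      have := (Finset.sum_eq_zero_iff_of_nonneg
        (fun i _ => Complex.normSq_nonneg _)).mp h0 I (Finset.mem_univ I)
      exact this
    exact sub_eq_zero.mp (Complex.normSq_eq_zero.mp hI)
  · intro hz
    have h0 : (∑ J, Complex.normSq (ρ J - zeta ρ * (starRingEnd ℂ) (ρ J))) = 0 := by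
      apply Finset.sum_eq_zero
      intro J _
      rw [← hz J]
      simp
    rw [keyR ρ hρ] at h0
    have : 1 - xi ρ = 0 := by
      rcases mul_eq_zero.mp h0 with h | h
      · exact absurd h hs.ne'
      · exact h
    linarith

/-- Toy model, Proposition 1 (xoneifreal): for nonzero `ρ`, `ξ(ρ) = 1` iff
`ρ_I = ζ(ρ)·conj(ρ_I)` for every `I`, iff `ρ` is a complex multiple of a real vector. -/
theorem statement1 {N : ℕ} (ρ : Fin N → ℂ) (hρ : ρ ≠ 0) :
    ((xi ρ = 1 ↔ ∀ I, ρ I = zeta ρ * (starRingEnd ℂ) (ρ I)) ∧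
     (xi ρ = 1 ↔ ∃ (c : ℂ) (x : Fin N → ℝ), ∀ I, ρ I = c * (x I : ℂ))) := by
  refine ⟨xi_one_iff ρ hρ, ?_, ?_⟩
  · -- ξ = 1 → ρ multiple of real vector
    intro hx
    have hz := (xi_one_iff ρ hρ).mp hx
    have hzn : zeta ρ ≠ 0 := by
      intro h0
      rw [h0] at hz
      apply hρ
      funext I
      simpa using hz I
    -- choose c with c^2 = ζ
    obtain ⟨c, hc⟩ : ∃ c : ℂ, c ^ 2 = zeta ρ := by
      refine ⟨Complex.exp (Complex.log (zeta ρ) / 2), ?_⟩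
      rw [sq, ← Complex.exp_add, add_halves]
      exact Complex.exp_log hzn
    have hcn : Complex.normSq c = 1 := by
      have h1 : Complex.normSq (zeta ρ) = 1 := hx
      have h2 : Complex.normSq c ^ 2 = 1 := by
        rw [← map_pow, hc, h1]
      have h3 : 0 ≤ Complex.normSq c := Complex.normSq_nonneg c
      nlinarith
    refine ⟨c, fun I => ((starRingEnd ℂ) c * ρ I).re, fun I => ?_⟩
    have hreal : (starRingEnd ℂ) ((starRingEnd ℂ) c * ρ I) = (starRingEnd ℂ) c * ρ I := by
      rw [map_mul, Complex.conj_conj]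
      have : (starRingEnd ℂ) (ρ I) = (starRingEnd ℂ) (zeta ρ) * ρ I := by
        conv_lhs => rw [hz I]
        rw [map_mul, Complex.conj_conj]
      rw [this, ← hc, ← mul_assoc]
      congr 1
      rw [map_pow]
      have : c * ((starRingEnd ℂ) c ^ 2) = ((starRingEnd ℂ) c * c) * (starRingEnd ℂ) c := by ring
      rw [this]
      have hcc : (starRingEnd ℂ) c * c = 1 := by
        have := Complex.normSq_eq_conj_mul_self (z := c)
        rw [hcn] at this
        simpa using this.symm
      rw [hcc, one_mul]
    have him : ((starRingEnd ℂ) c * ρ I).im = 0 := by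
      have := congrArg Complex.im hreal
      simp only [Complex.conj_im] at this
      linarith
    have hre : (((starRingEnd ℂ) c * ρ I).re : ℂ) = (starRingEnd ℂ) c * ρ I := by
      rw [Complex.ext_iff]
      simp [him]
    rw [hre, ← mul_assoc]
    have hcc : c * (starRingEnd ℂ) c = 1 := by
      have := Complex.mul_conj c
      rw [hcn] at this
      simpa using this
    rw [hcc, one_mul]
  · -- ρ multiple of real vector → ξ = 1
    rintro ⟨c, x, hcx⟩
    have hc0 : c ≠ 0 := by
      intro h0
      apply hρ
      funext I
      simp [hcx I, h0]
    have hx0 : (∑ I, (x I : ℝ) ^ 2) ≠ 0 := by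
      intro h0
      apply hρ
      funext I
      have := (Finset.sum_eq_zero_iff_of_nonneg (fun i _ => sq_nonneg (x i))).mp h0 I
        (Finset.mem_univ I)
      rw [hcx I]
      simp [pow_eq_zero_iff] at this
      simp [this]
    have hB : B ρ ρ = c ^ 2 * ((∑ I, (x I : ℝ) ^ 2 : ℝ) : ℂ) := by
      rw [B]
      push_cast
      rw [Finset.mul_sum]
      exact Finset.sum_congr rfl fun I _ => by rw [hcx I]; ring
    have hnsq : nsq ρ = Complex.normSq c * (∑ I, (x I : ℝ) ^ 2) := by
      rw [nsq_eq, Finset.mul_sum]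
      exact Finset.sum_congr rfl fun I _ => by
        rw [hcx I, Complex.normSq_mul]
        simp [Complex.normSq_ofReal, sq]
    rw [xi, zeta, hB, hnsq]
    have hsplit : ((Complex.normSq c * ∑ I, (x I : ℝ) ^ 2 : ℝ) : ℂ)
        = ((Complex.normSq c : ℝ) : ℂ) * ((∑ I, (x I : ℝ) ^ 2 : ℝ) : ℂ) := by
      norm_cast
    rw [hsplit, Complex.normSq_div, Complex.normSq_mul, Complex.normSq_mul, map_pow,
      Complex.normSq_ofReal, Complex.normSq_ofReal]
    have hc2 : Complex.normSq c ≠ 0 := Complex.normSq_pos.mpr hc0 |>.ne'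
    field_simp

end PureSpinorToy
end
end

section
/- Let N : ℕ, f : ℝ → ℂ, and ρ : Fin N → ℂ with ρ ≠ 0, ξ(ρ) < 1 and f(ξ(ρ)) ≠ 0. Set λ := P_f(ρ) and s := √(1 − ξ(ρ)). Then the projection can be inverted: for every index I, ρ_I = ((1 + s)/(2·f(ξ(ρ))·s))·λ_I + (ζ(ρ)/(2·conj(f(ξ(ρ)))·s))·conj(λ_I). (Toy-model form of the inverse reparametrization formula (Proj-inv): every vector is a linear combination of its projection and the conjugate of its projection.) -/
noncomputable section

open scoped BigOperators

namespace PureSpinorToy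

variable {N : ℕ}

/-- Toy model, inverse reparametrization (Proj-inv): every vector is the stated linear
combination of its projection `λ := P_f(ρ)` and the conjugate of its projection. -/
theorem statement7 {N : ℕ} (f : ℝ → ℂ) (ρ : Fin N → ℂ) (hρ : ρ ≠ 0)
    (hξ : xi ρ < 1) (hf : f (xi ρ) ≠ 0) :
    ∀ I, ρ I
      = ((1 + (Real.sqrt (1 - xi ρ) : ℂ)) / (2 * f (xi ρ) * (Real.sqrt (1 - xi ρ) : ℂ)))
          * P f ρ I
        + (zeta ρ / (2 * (starRingEnd ℂ) (f (xi ρ)) * (Real.sqrt (1 - xi ρ) : ℂ)))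
          * (starRingEnd ℂ) (P f ρ I) := by
  intro I
  have hs0 : 0 < Real.sqrt (1 - xi ρ) := Real.sqrt_pos.mpr (by linarith)
  set s : ℝ := Real.sqrt (1 - xi ρ) with hsdef
  have hsC : (s : ℂ) ≠ 0 := by exact_mod_cast hs0.ne'
  have hc : (1 + (s : ℂ)) ≠ 0 := by
    intro h
    have := congrArg Complex.re h
    simp at this
    linarith
  have hs2 : (s : ℂ) * (s : ℂ) = 1 - (xi ρ : ℂ) := by
    have h1 : s * s = 1 - xi ρ := Real.mul_self_sqrt (by linarith)
    exact_mod_cast congrArg (Complex.ofReal) h1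
  have hξz : ((xi ρ : ℝ) : ℂ) = (starRingEnd ℂ) (zeta ρ) * zeta ρ := by
    rw [xi, Complex.normSq_eq_conj_mul_self]
  have hFc : (starRingEnd ℂ) (f (xi ρ)) ≠ 0 := by simpa using hf
  simp only [P, Pi.smul_apply, Pi.sub_apply, smul_eq_mul, map_mul, map_sub, map_div₀,
    map_add, map_one, Complex.conj_conj, Complex.conj_ofReal, conjFun, ← hsdef]
  have hD1 : (2 * f (xi ρ) * (s:ℂ)) ≠ 0 := by
    exact mul_ne_zero (mul_ne_zero two_ne_zero hf) hsC
  have hD2 : (2 * (starRingEnd ℂ) (f (xi ρ)) * (s:ℂ)) ≠ 0 := by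
    exact mul_ne_zero (mul_ne_zero two_ne_zero hFc) hsC
  rw [div_mul_eq_mul_div (1 + (s:ℂ)) (2 * f (xi ρ) * (s:ℂ)),
    div_mul_eq_mul_div (zeta ρ) (2 * (starRingEnd ℂ) (f (xi ρ)) * (s:ℂ)),
    div_add_div _ _ hD1 hD2, eq_div_iff (mul_ne_zero hD1 hD2)]
  field_simp
  linear_combination (ρ I) * hs2
    - (ρ I) * hξz

end PureSpinorToy
end
end

section
/- Let N : ℕ and ρ : Fin N → ℂ with ρ ≠ 0 and ξ(ρ) < 1. With the special choice f = h, the inverse transformation takes the simple form: setting λ := P_h(ρ), one has ρ_I = λ_I + (ζ(ρ)/(1 + √(1 − ξ(ρ))))·conj(λ_I) for every index I. (Toy-model form of the Hermitian-case inverse formula (hermInverse)/(Proj-inv-alt-h).) -/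
noncomputable section

open scoped BigOperators

namespace PureSpinorToy

variable {N : ℕ}

/-- Toy model, Hermitian-case inverse formula (hermInverse)/(Proj-inv-alt-h):
with `f = h`, `ρ = λ + (ζ(ρ)/(1+√(1−ξ(ρ))))·λ̄` where `λ := P_h(ρ)`. -/
theorem statement8 {N : ℕ} (ρ : Fin N → ℂ) (hρ : ρ ≠ 0) (hξ : xi ρ < 1) :
    ∀ I, ρ I
      = P h ρ I
        + (zeta ρ / (1 + (Real.sqrt (1 - xi ρ) : ℂ))) * (starRingEnd ℂ) (P h ρ I) := by
  intro I
  have hs0 : 0 < Real.sqrt (1 - xi ρ) := Real.sqrt_pos.mpr (by linarith)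
  have hs2 : (Real.sqrt (1 - xi ρ) : ℝ) ^ 2 = 1 - xi ρ := Real.sq_sqrt (by linarith)
  have hz : zeta ρ * (starRingEnd ℂ) (zeta ρ) = ((xi ρ : ℝ) : ℂ) := by
    rw [Complex.mul_conj]; rfl
  set s : ℝ := Real.sqrt (1 - xi ρ) with hsdef
  have h1 : ((1 : ℂ) + (s : ℂ)) ≠ 0 := by
    have : ((1 + s : ℝ) : ℂ) ≠ 0 := Complex.ofReal_ne_zero.mpr (by positivity)
    push_cast at this; exact this
  have h2 : ((2 : ℂ) * (s : ℂ)) ≠ 0 := by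
    have : (s:ℂ) ≠ 0 := by exact_mod_cast Complex.ofReal_ne_zero.mpr (ne_of_gt hs0)
    simpa using this
  have hs2' : ((s : ℂ)) ^ 2 = 1 - ((xi ρ : ℝ) : ℂ) := by exact_mod_cast congrArg (Complex.ofReal) hs2
  simp only [P, h, Pi.smul_apply, Pi.sub_apply, smul_eq_mul, conjFun, map_mul, map_sub,
    map_div₀, map_add, map_one, Complex.conj_ofReal, Complex.conj_conj]
  push_cast
  rw [← hsdef]
  field_simp
  rw [eq_div_iff (by exact_mod_cast ne_of_gt hs0)]
  linear_combination ρ I * hz + ρ I * hs2'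


end PureSpinorToy
end
end

section
/- Let N : ℕ and ρ : Fin N → ℂ with ρ ≠ 0 and ξ(ρ) < 1. Then the real-valued potential Φ is Fréchet differentiable over ℝ at ρ, with derivative the ℝ-linear map v ↦ 2·Re⟪P_h(ρ), v⟫. (Toy-model form of Proposition 3, item 2: the Hermitian projection P_h is the gradient of the scalar potential Φ, i.e. P_h = ∂Φ/∂ρ̄ in Wirtinger form.) -/
noncomputable section

open scoped BigOperators

namespace PureSpinorToy

variable {N : ℕ}

open scoped Topology

-- auxiliary defs
def nf (σ : Fin N → ℂ) : ℝ := ∑ I, (σ I * (starRingEnd ℂ) (σ I)).re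
def F (σ : Fin N → ℂ) : ℝ :=
  (nf σ + Real.sqrt (nf σ * nf σ - Complex.normSq (B σ σ))) / 2

lemma nsq_eq_nf (σ : Fin N → ℂ) : nsq σ = nf σ := by
  simp [nsq, hInner, nf, Complex.re_sum, mul_comm]

lemma nf_nonneg (σ : Fin N → ℂ) : 0 ≤ nf σ := by
  refine Finset.sum_nonneg fun I _ => ?_
  rw [Complex.mul_conj]
  exact_mod_cast Complex.normSq_nonneg _

lemma normSq_B_le (σ : Fin N → ℂ) : Complex.normSq (B σ σ) ≤ nf σ * nf σ := by
  have habs : ‖B σ σ‖ ≤ nf σ := by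
    calc ‖B σ σ‖ ≤ ∑ I, ‖σ I * σ I‖ :=
          norm_sum_le _ _
      _ = nf σ := by
          refine Finset.sum_congr rfl fun I _ => ?_
          rw [norm_mul, Complex.mul_conj]
          simp [Complex.normSq_eq_norm_sq, sq]
  calc Complex.normSq (B σ σ) = ‖B σ σ‖ * ‖B σ σ‖ := by
        rw [Complex.normSq_eq_norm_sq, sq]
    _ ≤ nf σ * nf σ :=
        mul_le_mul habs habs (norm_nonneg _) (nf_nonneg σ)

lemma xi_eq (σ : Fin N → ℂ) : xi σ = Complex.normSq (B σ σ) / (nf σ * nf σ) := by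
  rw [xi, zeta, Complex.normSq_div, Complex.normSq_ofReal, nsq_eq_nf]

lemma Phi_eq_F (σ : Fin N → ℂ) (hσ : 0 < nf σ) : Phi σ = F σ := by
  have hle := normSq_B_le σ
  have hxile : xi σ ≤ 1 := by
    rw [xi_eq]
    exact div_le_one_of_le₀ hle (le_of_lt (mul_pos hσ hσ))
  have h1 : nf σ * Real.sqrt (1 - xi σ) = Real.sqrt (nf σ * nf σ - Complex.normSq (B σ σ)) := by
    rw [← Real.sqrt_mul_self hσ.le, ← Real.sqrt_mul (mul_self_nonneg _)]
    congr 1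
    rw [xi_eq]
    field_simp
    rw [Real.sq_sqrt (by positivity)]
  rw [Phi, F, nsq_eq_nf, ← h1]
  ring


abbrev pj (I : Fin N) : (Fin N → ℂ) →L[ℝ] ℂ := ContinuousLinearMap.proj I
abbrev cj : ℂ →L[ℝ] ℂ := (Complex.conjCLE : ℂ ≃L[ℝ] ℂ).toContinuousLinearMap
def Dn (ρ : Fin N → ℂ) : (Fin N → ℂ) →L[ℝ] ℝ :=
  ∑ I, Complex.reCLM.comp (ρ I • cj.comp (pj I) + (starRingEnd ℂ) (ρ I) • pj I)
def Db (ρ : Fin N → ℂ) : (Fin N → ℂ) →L[ℝ] ℂ := ∑ I, (ρ I • pj I + ρ I • pj I)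
def DnS (ρ : Fin N → ℂ) : (Fin N → ℂ) →L[ℝ] ℝ :=
  Complex.reCLM.comp ((B ρ ρ) • cj.comp (Db ρ) + (starRingEnd ℂ) (B ρ ρ) • Db ρ)

lemma Db_apply (ρ v : Fin N → ℂ) : Db ρ v = 2 * B ρ v := by
  simp [Db, B, ContinuousLinearMap.sum_apply, Finset.mul_sum]
  exact Finset.sum_congr rfl fun I _ => by ring

lemma Dn_apply (ρ v : Fin N → ℂ) : Dn ρ v = 2 * (hInner ρ v).re := by
  simp only [Dn, ContinuousLinearMap.sum_apply, ContinuousLinearMap.coe_comp',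
    Function.comp_apply, ContinuousLinearMap.add_apply, ContinuousLinearMap.coe_smul',
    Pi.smul_apply, smul_eq_mul, Complex.reCLM_apply, ContinuousLinearMap.proj_apply,
    ContinuousLinearEquiv.coe_coe, Complex.conjCLE_apply]
  rw [hInner, Complex.re_sum, Finset.mul_sum]
  refine Finset.sum_congr rfl fun I _ => ?_
  simp [Complex.add_re, Complex.mul_re, Complex.mul_im]
  ring

lemma DnS_apply (ρ v : Fin N → ℂ) :
    DnS ρ v = 4 * ((starRingEnd ℂ) (B ρ ρ) * B ρ v).re := by
  simp only [DnS, ContinuousLinearMap.coe_comp', Function.comp_apply,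
    ContinuousLinearMap.add_apply, ContinuousLinearMap.coe_smul', Pi.smul_apply,
    smul_eq_mul, Complex.reCLM_apply, ContinuousLinearEquiv.coe_coe, Complex.conjCLE_apply]
  rw [Db_apply]
  simp [Complex.add_re, Complex.mul_re, Complex.mul_im]
  ring


lemma hasFDerivAt_nf (ρ : Fin N → ℂ) : HasFDerivAt nf (Dn ρ) ρ := by
  refine HasFDerivAt.fun_sum fun I _ => ?_
  have h1 : HasFDerivAt (fun σ : Fin N → ℂ => σ I) (pj I) ρ := (pj I).hasFDerivAt
  have h2 : HasFDerivAt (fun σ : Fin N → ℂ => (starRingEnd ℂ) (σ I)) (cj.comp (pj I)) ρ :=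
    (cj.comp (pj I)).hasFDerivAt
  exact Complex.reCLM.hasFDerivAt.comp ρ (h1.mul h2)

lemma hasFDerivAt_B (ρ : Fin N → ℂ) : HasFDerivAt (fun σ => B σ σ) (Db ρ) ρ := by
  refine HasFDerivAt.fun_sum fun I _ => ?_
  have h1 : HasFDerivAt (fun σ : Fin N → ℂ => σ I) (pj I) ρ := (pj I).hasFDerivAt
  exact h1.mul h1

lemma hasFDerivAt_nSB (ρ : Fin N → ℂ) :
    HasFDerivAt (fun σ => Complex.normSq (B σ σ)) (DnS ρ) ρ := by
  have hb := hasFDerivAt_B ρ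
  have h2 : HasFDerivAt (fun σ : Fin N → ℂ => (starRingEnd ℂ) (B σ σ)) (cj.comp (Db ρ)) ρ :=
    cj.hasFDerivAt.comp ρ hb
  have h3 := Complex.reCLM.hasFDerivAt.comp ρ (hb.mul h2)
  have heq : (fun σ : Fin N → ℂ => Complex.normSq (B σ σ))
      = fun σ => (B σ σ * (starRingEnd ℂ) (B σ σ)).re := by
    funext σ; rw [Complex.mul_conj]; simp
  rw [heq]; exact h3

lemma hasFDerivAt_F (ρ : Fin N → ℂ) (hpos : 0 < nf ρ * nf ρ - Complex.normSq (B ρ ρ)) :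
    HasFDerivAt F
      (((1:ℝ)/2) • ((Dn ρ) + (1 / (2 * Real.sqrt (nf ρ * nf ρ - Complex.normSq (B ρ ρ)))) •
        (nf ρ • Dn ρ + nf ρ • Dn ρ - DnS ρ))) ρ := by
  have hn := hasFDerivAt_nf ρ
  have hg : HasFDerivAt (fun σ => nf σ * nf σ - Complex.normSq (B σ σ))
      (nf ρ • Dn ρ + nf ρ • Dn ρ - DnS ρ) ρ := (hn.mul hn).sub (hasFDerivAt_nSB ρ)
  have hs := (Real.hasDerivAt_sqrt (ne_of_gt hpos)).comp_hasFDerivAt ρ hg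
  have hFeq : F (N:=N) = fun σ : Fin N → ℂ => (1/2 : ℝ) * (nf σ + Real.sqrt (nf σ * nf σ - Complex.normSq (B σ σ))) := by
    funext σ; rw [F]; ring
  rw [hFeq]
  simpa [smul_smul] using (hn.add hs).const_mul ((1:ℝ)/2)



/-- Toy model, Proposition 3 item 2: the potential `Φ` is (real) Fréchet differentiable
at `ρ`, with derivative `v ↦ 2·Re⟪P_h(ρ), v⟫`. -/
theorem statement10 {N : ℕ} (ρ : Fin N → ℂ) (hρ : ρ ≠ 0) (hξ : xi ρ < 1) :
    ∃ L : (Fin N → ℂ) →L[ℝ] ℝ, HasFDerivAt Phi L ρ ∧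
      ∀ v, L v = 2 * (hInner (P h ρ) v).re := by
  have hn0 : 0 < nf ρ := by
    obtain ⟨I, hI⟩ := Function.ne_iff.mp hρ
    refine Finset.sum_pos' (fun J _ => ?_) ⟨I, Finset.mem_univ I, ?_⟩
    · rw [Complex.mul_conj]; exact_mod_cast Complex.normSq_nonneg _
    · rw [Complex.mul_conj]; exact_mod_cast Complex.normSq_pos.mpr hI
  have hpos : 0 < nf ρ * nf ρ - Complex.normSq (B ρ ρ) := by
    have := (div_lt_one (mul_pos hn0 hn0)).mp (by rw [← xi_eq]; exact hξ)
    linarith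
  set c : ℝ := Real.sqrt (1 - xi ρ) with hc_def
  have hc : 0 < c := Real.sqrt_pos.mpr (by linarith)
  have hs : Real.sqrt (nf ρ * nf ρ - Complex.normSq (B ρ ρ)) = nf ρ * c := by
    have h1 : nf ρ * nf ρ - Complex.normSq (B ρ ρ) = (nf ρ * nf ρ) * (1 - xi ρ) := by
      rw [xi_eq]; field_simp
    rw [h1, Real.sqrt_mul (mul_self_nonneg _), Real.sqrt_mul_self hn0.le]
  have hF := hasFDerivAt_F ρ hpos
  have hev : Phi =ᶠ[𝓝 ρ] F := by
    have hcont : Continuous (nf (N := N)) := by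
      refine continuous_finset_sum _ fun I _ => Complex.continuous_re.comp ?_
      exact (continuous_apply I).mul (Complex.continuous_conj.comp (continuous_apply I))
    filter_upwards [(isOpen_lt continuous_const hcont).mem_nhds hn0] with σ hσ
    exact Phi_eq_F σ hσ
  refine ⟨_, hF.congr_of_eventuallyEq hev, ?_⟩
  intro v
  have hPv : hInner (P h ρ) v
      = (starRingEnd ℂ) (h (xi ρ)) *
        (hInner ρ v - (starRingEnd ℂ) (zeta ρ / (1 + ((Real.sqrt (1 - xi ρ) : ℝ) : ℂ))) * B ρ v) := by
    rw [hInner, hInner, B, mul_sub, Finset.mul_sum, Finset.mul_sum, Finset.mul_sum, ← Finset.sum_sub_distrib]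
    refine Finset.sum_congr rfl fun I _ => ?_
    simp only [P, conjFun, Pi.smul_apply, Pi.sub_apply, smul_eq_mul, map_mul, map_sub, Complex.conj_conj]
    ring
  have hconj_h : (starRingEnd ℂ) (h (xi ρ)) = (((1 + c) / (2 * c) : ℝ) : ℂ) := by
    rw [h]; exact Complex.conj_ofReal _
  have hz : (starRingEnd ℂ) (zeta ρ / (1 + ((Real.sqrt (1 - xi ρ) : ℝ) : ℂ))) * B ρ v
      = ((starRingEnd ℂ) (B ρ ρ) * B ρ v) / (((nf ρ * (1 + c)) : ℝ) : ℂ) := by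
    rw [zeta, nsq_eq_nf, ← hc_def]
    rw [map_div₀, map_div₀]
    simp only [map_add, map_one, Complex.conj_ofReal]
    push_cast
    field_simp
  -- compute LHS
  simp only [ContinuousLinearMap.smul_apply, ContinuousLinearMap.add_apply,
    ContinuousLinearMap.sub_apply, smul_eq_mul]
  rw [Dn_apply, DnS_apply, hs, hPv, hconj_h, hz]
  rw [Complex.re_ofReal_mul, Complex.sub_re, Complex.div_ofReal_re]
  set A := (hInner ρ v).re
  set R := ((starRingEnd ℂ) (B ρ ρ) * B ρ v).re
  have hne1 : nf ρ ≠ 0 := hn0.ne'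
  have hne2 : c ≠ 0 := hc.ne'
  have hne3 : (1 : ℝ) + c ≠ 0 := by positivity
  field_simp
  ring

end PureSpinorToy
end
end

section
/- Let N : ℕ and let χ : Fin N → ℂ be a null reference vector (B(χ,χ) = 0). For ρ : Fin N → ℂ with B(ρ,χ) ≠ 0 define Q(ρ) := ρ − (B(ρ,ρ)/(2·B(ρ,χ))) • χ. Then: (i) B(Q(ρ), Q(ρ)) = 0 for every such ρ; (ii) Q(λ) = λ for every null λ with B(λ,χ) ≠ 0; (iii) for every null λ with B(λ,χ) ≠ 0, Q is Fréchet differentiable over ℂ (holomorphic) at λ with derivative the ℂ-linear map K : v ↦ v − (B(λ,v)/B(λ,χ)) • χ, and K is idempotent: K ∘ K = K. (Toy-model form of the non-covariant reference-spinor projection (non-cov-integrated)/(toy:PchiWithpurechi) and of the Oda–Tonin projector.) -/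
noncomputable section

open scoped BigOperators

namespace PureSpinorToy

variable {N : ℕ}

/-- The non-covariant projection with a null reference vector `χ`:
`Q(ρ) := ρ − (B(ρ,ρ)/(2·B(ρ,χ))) • χ`. -/
def Q (χ ρ : Fin N → ℂ) : Fin N → ℂ := ρ - (B ρ ρ / (2 * B ρ χ)) • χ

lemma B_symm (ρ σ : Fin N → ℂ) : B ρ σ = B σ ρ := by
  simp [B, mul_comm]

lemma B_sub_left (ρ τ σ : Fin N → ℂ) : B (ρ - τ) σ = B ρ σ - B τ σ := by
  simp [B, sub_mul, Finset.sum_sub_distrib]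

lemma B_smul_left (c : ℂ) (ρ σ : Fin N → ℂ) : B (c • ρ) σ = c * B ρ σ := by
  simp [B, Finset.mul_sum, mul_assoc]

lemma B_sub_right (σ ρ τ : Fin N → ℂ) : B σ (ρ - τ) = B σ ρ - B σ τ := by
  simp [B, mul_sub, Finset.sum_sub_distrib]

lemma B_smul_right (c : ℂ) (σ ρ : Fin N → ℂ) : B σ (c • ρ) = c * B σ ρ := by
  simp [B, Finset.mul_sum, mul_left_comm]

/-- The pairing with fixed left argument as a continuous linear map. -/
def Bc (σ : Fin N → ℂ) : (Fin N → ℂ) →L[ℂ] ℂ :=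
  ∑ I : Fin N, σ I • (ContinuousLinearMap.proj I : (Fin N → ℂ) →L[ℂ] ℂ)

lemma Bc_apply (σ ρ : Fin N → ℂ) : Bc σ ρ = B σ ρ := by
  simp [Bc, B, ContinuousLinearMap.sum_apply]

lemma hasFDerivAt_B_right (σ x : Fin N → ℂ) :
    HasFDerivAt (fun ρ => B ρ σ) (Bc σ) x := by
  have := (Bc σ).hasFDerivAt (x := x)
  refine this.congr_of_eventuallyEq (Filter.Eventually.of_forall fun ρ => ?_)
  rw [Bc_apply, B_symm]

lemma hasFDerivAt_B_quad (x : Fin N → ℂ) :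
    HasFDerivAt (fun ρ => B ρ ρ) (Bc x + Bc x) x := by
  have hproj : ∀ I : Fin N, HasFDerivAt (fun ρ : Fin N → ℂ => ρ I)
      (ContinuousLinearMap.proj I : (Fin N → ℂ) →L[ℂ] ℂ) x :=
    fun I => (ContinuousLinearMap.proj I : (Fin N → ℂ) →L[ℂ] ℂ).hasFDerivAt
  have h1 : ∀ I : Fin N, HasFDerivAt (fun ρ : Fin N → ℂ => ρ I * ρ I)
      (x I • (ContinuousLinearMap.proj I : (Fin N → ℂ) →L[ℂ] ℂ)
        + x I • (ContinuousLinearMap.proj I : (Fin N → ℂ) →L[ℂ] ℂ)) x :=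
    fun I => (hproj I).mul (hproj I)
  have := HasFDerivAt.sum (u := Finset.univ) (fun I _ => h1 I)
  convert this using 1 <;> try rfl
  ext ρ
  simp [Bc_apply, B, Finset.sum_add_distrib]
  ext ρ
  simp [Bc_apply, B, Finset.sum_add_distrib]

/-- Toy model form of the reference-spinor projection (non-cov-integrated)/
(toy:PchiWithpurechi) and the Oda–Tonin projector: `Q` maps onto the null quadric,
restricts to the identity on it, and is holomorphic at null points with idempotent
derivative `K : v ↦ v − (B(λ,v)/B(λ,χ)) • χ`. -/
theorem statement17 {N : ℕ} (χ : Fin N → ℂ) (hχ : B χ χ = 0) :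
    (∀ ρ : Fin N → ℂ, B ρ χ ≠ 0 → B (Q χ ρ) (Q χ ρ) = 0) ∧
    (∀ lam : Fin N → ℂ, B lam lam = 0 → B lam χ ≠ 0 → Q χ lam = lam) ∧
    (∀ lam : Fin N → ℂ, B lam lam = 0 → B lam χ ≠ 0 →
      ∃ K : (Fin N → ℂ) →L[ℂ] (Fin N → ℂ), HasFDerivAt (Q χ) K lam ∧
        (∀ v, K v = v - (B lam v / B lam χ) • χ) ∧
        ∀ v, K (K v) = K v) := by
  refine ⟨?_, ?_, ?_⟩
  · intro ρ hρχ
    have expand : B (Q χ ρ) (Q χ ρ)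
        = B ρ ρ - (B ρ ρ / (2 * B ρ χ)) * B ρ χ - (B ρ ρ / (2 * B ρ χ)) * B χ ρ
          + (B ρ ρ / (2 * B ρ χ)) * ((B ρ ρ / (2 * B ρ χ)) * B χ χ) := by
      simp only [Q, B_sub_left, B_sub_right, B_smul_left, B_smul_right]
      ring
    rw [expand, hχ, B_symm χ ρ]
    field_simp
    ring
  · intro lam h0 _
    simp [Q, h0]
  · intro lam h0 hlχ
    have h2 : (2 : ℂ) * B lam χ ≠ 0 := by simp [hlχ]
    have hnum : HasFDerivAt (fun ρ => B ρ ρ) (Bc lam + Bc lam) lam := hasFDerivAt_B_quad lam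
    have hden : HasFDerivAt (fun ρ : Fin N → ℂ => (2 : ℂ) * B ρ χ) ((2 : ℂ) • Bc χ) lam :=
      (hasFDerivAt_B_right χ lam).const_mul 2
    have hinv : HasFDerivAt (fun ρ : Fin N → ℂ => ((2 : ℂ) * B ρ χ)⁻¹)
        ((-(ContinuousLinearMap.mulLeftRight ℂ ℂ ((2 : ℂ) * B lam χ)⁻¹
          ((2 : ℂ) * B lam χ)⁻¹)).comp ((2 : ℂ) • Bc χ)) lam :=
      (hasFDerivAt_inv' h2).comp lam hden
    have hg : HasFDerivAt (fun ρ : Fin N → ℂ => B ρ ρ * ((2 : ℂ) * B ρ χ)⁻¹)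
        (B lam lam • ((-(ContinuousLinearMap.mulLeftRight ℂ ℂ ((2 : ℂ) * B lam χ)⁻¹
          ((2 : ℂ) * B lam χ)⁻¹)).comp ((2 : ℂ) • Bc χ))
          + ((2 : ℂ) * B lam χ)⁻¹ • (Bc lam + Bc lam)) lam := hnum.mul hinv
    refine ⟨ContinuousLinearMap.id ℂ (Fin N → ℂ)
      - ((B lam χ)⁻¹ • Bc lam).smulRight χ, ?_, ?_, ?_⟩
    · have hQ := (hasFDerivAt_id lam).sub (hg.smul_const χ)
      have heq : Q χ =ᶠ[nhds lam]
          (fun x : Fin N → ℂ => id x - (B x x * ((2 : ℂ) * B x χ)⁻¹) • χ) :=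
        Filter.Eventually.of_forall (fun ρ => by simp [Q, div_eq_mul_inv])
      have hQ' := hQ.congr_of_eventuallyEq heq
      convert hQ' using 1 <;> try rfl
      ext v
      simp only [ContinuousLinearMap.sub_apply, ContinuousLinearMap.id_apply,
        ContinuousLinearMap.smulRight_apply, ContinuousLinearMap.smul_apply,
        ContinuousLinearMap.add_apply, ContinuousLinearMap.coe_sub',
        Pi.sub_apply, ContinuousLinearMap.coe_smul', Pi.smul_apply]
      congr 1
      rw [h0]
      simp only [zero_smul, zero_add, smul_smul, smul_eq_mul, Bc_apply,
        ContinuousLinearMap.add_apply]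
      congr 1
      field_simp
      ring
    · intro v
      simp [ContinuousLinearMap.sub_apply, ContinuousLinearMap.smulRight_apply,
        ContinuousLinearMap.smul_apply, Bc_apply, div_eq_inv_mul]
    · intro v
      have hK : ∀ w, (ContinuousLinearMap.id ℂ (Fin N → ℂ)
          - ((B lam χ)⁻¹ • Bc lam).smulRight χ) w = w - (B lam w / B lam χ) • χ := by
        intro w
        simp [ContinuousLinearMap.sub_apply, ContinuousLinearMap.smulRight_apply,
          ContinuousLinearMap.smul_apply, Bc_apply, div_eq_inv_mul]
      simp only [hK]
      have hz : B lam (v - (B lam v / B lam χ) • χ) = 0 := by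
        rw [B_sub_right, B_smul_right]
        field_simp
        ring
      rw [hz]
      simp

end PureSpinorToy
end
end

section
/- Let 0 < b ≤ 1 and let f : ℝ → ℂ satisfy f(0) = 1 and, for every t ∈ [0, b), f is differentiable at t with derivative f′(t) = f(t)/(2·(1−t)·(1+√(1−t))). Then f(t) = (1+√(1−t))/(2·√(1−t)) for all t ∈ [0, b). (The ODE characterization of the function h arising in the Hermiticity proof of Proposition 3: h is the unique solution with f(0) = 1 of the differential equation f′/f = 1/(2(1−ξ)(1+√(1−ξ))).) -/
noncomputable section

open scoped BigOperators

namespace PureSpinorToy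

variable {N : ℕ}

/-- ODE characterization of `h`: the unique solution with `f(0) = 1` of
`f′(t) = f(t)/(2(1−t)(1+√(1−t)))` on `[0,b)` is `f(t) = (1+√(1−t))/(2√(1−t))`. -/
theorem statement18 (b : ℝ) (hb0 : 0 < b) (hb1 : b ≤ 1) (f : ℝ → ℂ)
    (hf0 : f 0 = 1)
    (hf' : ∀ t ∈ Set.Ico (0 : ℝ) b,
      HasDerivAt f (f t / (2 * ((1 - t : ℝ) : ℂ) * (1 + (Real.sqrt (1 - t) : ℂ)))) t) :
    ∀ t ∈ Set.Ico (0 : ℝ) b,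
      f t = (((1 + Real.sqrt (1 - t)) / (2 * Real.sqrt (1 - t)) : ℝ) : ℂ) := by
  -- auxiliary function u(x) = 2√(1-x)/(1+√(1-x)); we show f·u is constant.
  set u : ℝ → ℝ := fun x => 2 * Real.sqrt (1 - x) / (1 + Real.sqrt (1 - x)) with hu
  have hu' : ∀ x, x < 1 → HasDerivAt u
      (-(1 / (Real.sqrt (1 - x) * (1 + Real.sqrt (1 - x)) ^ 2))) x := by
    intro x hx
    have h1x : (0 : ℝ) < 1 - x := by linarith
    have hs : 0 < Real.sqrt (1 - x) := Real.sqrt_pos.mpr h1x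
    have hsd : HasDerivAt (fun y => Real.sqrt (1 - y)) (-(1 / (2 * Real.sqrt (1 - x)))) x := by
      have h₁ : HasDerivAt (fun y : ℝ => 1 - y) (-1) x := by
        simpa using (hasDerivAt_id x).const_sub 1
      have := (Real.hasDerivAt_sqrt (ne_of_gt h1x)).comp x h₁
      simpa [mul_comm, Function.comp_def] using this
    have hnum : HasDerivAt (fun y => 2 * Real.sqrt (1 - y))
        (2 * (-(1 / (2 * Real.sqrt (1 - x))))) x := hsd.const_mul 2
    have hden : HasDerivAt (fun y => 1 + Real.sqrt (1 - y))
        (-(1 / (2 * Real.sqrt (1 - x)))) x := hsd.const_add 1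
    have hden0 : 1 + Real.sqrt (1 - x) ≠ 0 := by positivity
    have := hnum.div hden hden0
    convert this using 1 <;> try rfl
    field_simp
    ring
  intro t ht
  obtain ⟨ht0, htb⟩ := ht
  have ht1 : t < 1 := lt_of_lt_of_le htb hb1
  set F : ℝ → ℂ := fun x => f x * (u x : ℂ) with hF
  have hF' : ∀ x ∈ Set.Ico (0 : ℝ) b, HasDerivAt F 0 x := by
    intro x hx
    have hx1 : x < 1 := lt_of_lt_of_le hx.2 hb1
    have h1x : (0 : ℝ) < 1 - x := by linarith
    have hs : 0 < Real.sqrt (1 - x) := Real.sqrt_pos.mpr h1x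
    have hsq : (Real.sqrt (1 - x)) ^ 2 = 1 - x := Real.sq_sqrt (le_of_lt h1x)
    have hmul := (hf' x hx).mul ((hu' x hx1).ofReal_comp)
    convert hmul using 1 <;> try rfl
    set s : ℝ := Real.sqrt (1 - x)
    have hs0 : (s : ℂ) ≠ 0 := by exact_mod_cast ne_of_gt hs
    have hden : (1 : ℂ) + s ≠ 0 := by
      have : (0:ℝ) < 1 + s := by positivity
      exact_mod_cast ne_of_gt this
    have hsqC : ((1 - x : ℝ) : ℂ) = (s : ℂ) ^ 2 := by
      push_cast [← hsq]; ring
    have hD : (2 * (s:ℂ) ^ 2 * (1 + (s:ℂ)) * (1 + (s:ℂ))) ≠ 0 :=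
      mul_ne_zero (mul_ne_zero (mul_ne_zero two_ne_zero (pow_ne_zero 2 hs0)) hden) hden
    rw [hu]
    beta_reduce
    rw [show Real.sqrt (1 - x) = s from rfl]
    push_cast [hsqC]
    field_simp
    ring
  have hcont : ContinuousOn F (Set.Icc 0 t) := by
    intro x hx
    exact (hF' x ⟨hx.1, lt_of_le_of_lt hx.2 htb⟩).continuousAt.continuousWithinAt
  have hconst := constant_of_has_deriv_right_zero hcont
    (fun x hx => ((hF' x ⟨hx.1, lt_of_lt_of_le hx.2 (le_of_lt htb)⟩).hasDerivWithinAt))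
  have hFt : F t = F 0 := hconst t (Set.right_mem_Icc.mpr ht0)
  have hu0 : u 0 = 1 := by norm_num [hu]
  have hF0 : F 0 = 1 := by simp [hF, hf0, hu0]
  have hst : 0 < Real.sqrt (1 - t) := Real.sqrt_pos.mpr (by linarith)
  have hut : (u t : ℂ) ≠ 0 := by
    have : (0:ℝ) < u t := by
      rw [hu]; positivity
    exact_mod_cast ne_of_gt this
  have : f t * (u t : ℂ) = 1 := hFt.trans hF0
  have hft : f t = ((u t : ℂ))⁻¹ := by
    field_simp at this ⊢
    linear_combination this
  rw [hft, hu]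
  set s : ℝ := Real.sqrt (1 - t)
  have hs0 : (s : ℂ) ≠ 0 := by exact_mod_cast ne_of_gt hst
  have hden : (1 : ℂ) + s ≠ 0 := by
    have : (0:ℝ) < 1 + s := by positivity
    exact_mod_cast ne_of_gt this
  push_cast
  rw [inv_div]

end PureSpinorToy
end
end
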